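/- Let k > 1 and let f be a good function of order k. Then for any natural number n ≥ k, f(kn, n)/n ≤ 1 − k! / ∏_{i=0}^{k−1} (k/(k−1) + i). -/

import Mathlib

noncomputable def Bc (k j : ℕ) : ℝ :=
  (1/(k:ℝ)) * ∏ i ∈ Finset.Ico 1 j, (((k:ℝ)-1)*i) / (((k:ℝ)-1)*(i+1)+1)

noncomputable def Ac (k j : ℕ) : ℝ := 1 - (k:ℝ)*(j:ℝ)*(Bc k j)

lemma Bc_pos {k : ℕ} (hk : 1 < k) (j : ℕ) : 0 < Bc k j := by
  have hK : (2:ℝ) ≤ (k:ℝ) := by exact_mod_cast hk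
  unfold Bc
  apply mul_pos (by positivity)
  apply Finset.prod_pos
  intro i hi
  have h1 : 1 ≤ i := (Finset.mem_Ico.mp hi).1
  have : (1:ℝ) ≤ (i:ℝ) := by exact_mod_cast h1
  have hk1 : (1:ℝ) ≤ (k:ℝ)-1 := by linarith
  apply div_pos <;> nlinarith

lemma Bc_one {k : ℕ} : Bc k 1 = 1/(k:ℝ) := by
  unfold Bc; simp

lemma Bc_succ {k : ℕ} (j : ℕ) (hj : 1 ≤ j) :
    Bc k (j+1) = Bc k j * ((((k:ℝ)-1)*j) / (((k:ℝ)-1)*(j+1)+1)) := by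
  unfold Bc
  rw [Finset.prod_Ico_succ_top hj]
  push_cast
  ring

lemma Bc_le {k : ℕ} (hk : 1 < k) : ∀ j : ℕ, 1 ≤ j →
    Bc k j ≤ ((k:ℝ)-1)/((k:ℝ)*((j:ℝ)*(k:ℝ)-1)) := by
  have hK : (2:ℝ) ≤ (k:ℝ) := by exact_mod_cast hk
  intro j hj
  induction j, hj using Nat.le_induction with
  | base =>
      rw [Bc_one]
      rw [div_le_div_iff₀ (by positivity) (by push_cast; nlinarith)]
      push_cast; nlinarith
  | succ t ht ih =>
      rw [Bc_succ t ht]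
      have htR : (1:ℝ) ≤ (t:ℝ) := by exact_mod_cast ht
      have hD : (0:ℝ) < ((k:ℝ)-1)*((t:ℝ)+1)+1 := by nlinarith
      have hnum : (0:ℝ) ≤ (((k:ℝ)-1)*t) := by nlinarith
      have h1 : Bc k (t+1) ≥ 0 := le_of_lt (Bc_pos hk (t+1))
      have hfac : (0:ℝ) ≤ (((k:ℝ)-1)*t) / (((k:ℝ)-1)*((t:ℝ)+1)+1) := by positivity
      calc Bc k t * ((((k:ℝ)-1)*t) / (((k:ℝ)-1)*(t+1)+1))
          ≤ (((k:ℝ)-1)/((k:ℝ)*((t:ℝ)*(k:ℝ)-1))) * ((((k:ℝ)-1)*t) / (((k:ℝ)-1)*(t+1)+1)) := by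
            apply mul_le_mul_of_nonneg_right ih
            push_cast
            exact hfac
        _ ≤ ((k:ℝ)-1)/((k:ℝ)*(((t+1):ℕ)*(k:ℝ)-1)) := by
            push_cast
            have htk : (0:ℝ) < (k:ℝ)*((t:ℝ)*(k:ℝ)-1) := by nlinarith
            have htk1 : (0:ℝ) < (k:ℝ)*(((t:ℝ)+1)*(k:ℝ)-1) := by nlinarith
            rw [div_mul_div_comm, div_le_div_iff₀ (by positivity) htk1]
            have hh : (0:ℝ) ≤ ((k:ℝ)-1)*(k:ℝ)^2*((t:ℝ)-1) := mul_nonneg (mul_nonneg (by linarith) (sq_nonneg _)) (by linarith)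
            nlinarith [hh]

lemma Ac_nonneg {k : ℕ} (hk : 1 < k) {j : ℕ} (hj : 1 ≤ j) : 0 ≤ Ac k j := by
  have hK : (2:ℝ) ≤ (k:ℝ) := by exact_mod_cast hk
  have hjR : (1:ℝ) ≤ (j:ℝ) := by exact_mod_cast hj
  have hjk : (2:ℝ) ≤ (j:ℝ)*(k:ℝ) := by nlinarith
  have hle := Bc_le hk j hj
  have hd : (0:ℝ) < (k:ℝ)*((j:ℝ)*(k:ℝ)-1) := mul_pos (by linarith) (by linarith)
  unfold Ac
  rw [sub_nonneg]
  calc (k:ℝ)*(j:ℝ)*Bc k j ≤ (k:ℝ)*(j:ℝ)*(((k:ℝ)-1)/((k:ℝ)*((j:ℝ)*(k:ℝ)-1))) := by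
        apply mul_le_mul_of_nonneg_left hle (by positivity)
    _ ≤ 1 := by
        rw [← mul_div_assoc, div_le_one hd]
        nlinarith

lemma one_le_kAB {k : ℕ} (hk : 1 < k) {j : ℕ} (hj : 1 ≤ j) :
    1 ≤ (k:ℝ) * (Ac k j + Bc k j) := by
  have hK : (2:ℝ) ≤ (k:ℝ) := by exact_mod_cast hk
  have hjR : (1:ℝ) ≤ (j:ℝ) := by exact_mod_cast hj
  have hjk : (2:ℝ) ≤ (j:ℝ)*(k:ℝ) := by nlinarith
  have hle := Bc_le hk j hj
  have hpos : 0 < Bc k j := Bc_pos hk j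
  have hd : (0:ℝ) < (k:ℝ)*((j:ℝ)*(k:ℝ)-1) := mul_pos (by linarith) (by linarith)
  have h2 : Bc k j * ((k:ℝ)*((j:ℝ)*(k:ℝ)-1)) ≤ (k:ℝ)-1 := by
    rw [← le_div_iff₀ hd]; exact hle
  unfold Ac
  nlinarith [h2]

lemma Bc_rec {k : ℕ} (hk : 1 < k) {t : ℕ} (ht : 1 ≤ t) :
    (((k:ℝ)-1)*(t+1)+1) * Bc k (t+1) = ((k:ℝ)-1)*t*Bc k t := by
  have hK : (2:ℝ) ≤ (k:ℝ) := by exact_mod_cast hk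
  have htR : (1:ℝ) ≤ (t:ℝ) := by exact_mod_cast ht
  have hD : ((k:ℝ)-1)*((t:ℝ)+1)+1 ≠ 0 := by nlinarith
  rw [Bc_succ t ht]
  field_simp

lemma Bc_mono {k : ℕ} (hk : 1 < k) {t : ℕ} (ht : 1 ≤ t) : Bc k (t+1) ≤ Bc k t := by
  have hK : (2:ℝ) ≤ (k:ℝ) := by exact_mod_cast hk
  have htR : (1:ℝ) ≤ (t:ℝ) := by exact_mod_cast ht
  have h3 : (0:ℝ) < ((k:ℝ)-1)*(t:ℝ) := by nlinarith
  have h := Bc_rec hk ht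
  have hp := Bc_pos hk (t+1)
  have key : ((k:ℝ)-1)*(t:ℝ)*(Bc k t - Bc k (t+1)) = (k:ℝ)*Bc k (t+1) := by
    linear_combination -h
  nlinarith [key, hp, h3]

lemma chain_le {k : ℕ} (hk : 1 < k) (Nr Mr : ℝ) (hN : 0 ≤ Nr) :
    ∀ i j : ℕ, 1 ≤ i → i ≤ j → Mr ≤ (i:ℝ)*Nr →
      Ac k i * Nr + Bc k i * Mr ≤ Ac k j * Nr + Bc k j * Mr := by
  intro i j hi hij hM
  induction j, hij using Nat.le_induction with
  | base => exact le_rfl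
  | succ t ht ih =>
      have ht1 : 1 ≤ t := le_trans hi ht
      have hrec := Bc_rec hk ht1
      have hmono := Bc_mono hk ht1
      have hAdiff : Ac k (t+1) - Ac k t = (t:ℝ)*(Bc k t - Bc k (t+1)) := by
        unfold Ac; push_cast; linear_combination -hrec
      have htiN : Mr ≤ (t:ℝ)*Nr := by
        have : (i:ℝ) ≤ (t:ℝ) := by exact_mod_cast ht
        nlinarith
      have : Ac k t * Nr + Bc k t * Mr ≤ Ac k (t+1) * Nr + Bc k (t+1) * Mr := by
        nlinarith [mul_nonneg (sub_nonneg.2 hmono) (sub_nonneg.2 htiN)]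
      linarith [ih]

lemma main_ind (k : ℕ) (hk : 1 < k) (f : ℤ → ℤ → ℤ)
    (hzero : ∀ M N : ℤ, M ≤ 0 ∨ N ≤ 0 → f M N = 0)
    (hrec : ∀ M N : ℤ, 0 < M → 0 < N →
      f M N = f (M - (k : ℤ) * ⌈(M : ℚ) / (N : ℚ)⌉) (N - 1) + 1) :
    ∀ N : ℤ, 1 ≤ N → ∀ M : ℤ, 0 < M → (k:ℤ) ∣ M → M ≤ (k:ℤ)*(N - k + 1) →
      ∀ j : ℕ, 1 ≤ j → M ≤ (j:ℤ)*N →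
      (f M N : ℝ) ≤ Ac k j * (N:ℝ) + Bc k j * (M:ℝ) := by
  have hkZ : (2:ℤ) ≤ (k:ℤ) := by exact_mod_cast hk
  have hK : (2:ℝ) ≤ (k:ℝ) := by exact_mod_cast hk
  refine Int.le_induction ?_ ?_
  · intro M hM _ hdom j hj hjN
    exfalso
    nlinarith [hM, hdom, hkZ]
  · intro N hN1 ih M hM hdvd hdom j hj hjN
    have hNpos : (0:ℤ) < N + 1 := by linarith
    have hNq : (0:ℚ) < ((N:ℚ)+1) := by exact_mod_cast hNpos
    set i : ℤ := ⌈(M : ℚ) / ((N:ℚ) + 1)⌉ with hi_def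
    have hfM : f M (N+1) = f (M - (k:ℤ)*i) N + 1 := by
      have h := hrec M (N+1) hM hNpos
      have hcast2 : ((N+1 : ℤ) : ℚ) = (N:ℚ) + 1 := by push_cast; ring
      rw [hcast2] at h
      simpa using h
    have hi1 : 1 ≤ i := by
      have h0 : (0:ℚ) < (M:ℚ) / ((N:ℚ) + 1) :=
        div_pos (by exact_mod_cast hM) hNq
      have : (0:ℤ) < i := by
        rw [hi_def]
        exact Int.lt_ceil.mpr (by exact_mod_cast h0)
      linarith
    have hMi : M ≤ i * (N+1) := by
      have h1 : (M:ℚ) / ((N:ℚ) + 1) ≤ (i:ℚ) := Int.le_ceil _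
      rw [div_le_iff₀ hNq] at h1
      have h2 : (M:ℚ) ≤ (i:ℚ) * ((N:ℚ)+1) := h1
      exact_mod_cast h2
    have hij : i ≤ (j:ℤ) := by
      rw [hi_def]
      apply Int.ceil_le.mpr
      rw [div_le_iff₀ hNq]
      exact_mod_cast hjN
    have hkN : (k:ℤ) ≤ N + 1 := by
      have h0 : (0:ℤ) < (k:ℤ)*((N+1) - k + 1) := lt_of_lt_of_le hM hdom
      by_contra hc
      push_neg at hc
      nlinarith [h0]
    have hkM : (k:ℤ) ≤ M := Int.le_of_dvd hM hdvd
    by_cases hM' : M - (k:ℤ)*i ≤ 0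
    · -- terminal step
      have hf0 : f (M - (k:ℤ)*i) N = 0 := hzero _ _ (Or.inl hM')
      rw [hfM, hf0]
      have hA := Ac_nonneg hk hj
      have hB := le_of_lt (Bc_pos hk j)
      have hkAB := one_le_kAB hk hj
      have hkNR : (k:ℝ) ≤ (N:ℝ) + 1 := by exact_mod_cast hkN
      have hkMR : (k:ℝ) ≤ (M:ℝ) := by exact_mod_cast hkM
      push_cast
      nlinarith [mul_le_mul_of_nonneg_left hkNR hA, mul_le_mul_of_nonneg_left hkMR hB]
    · -- recursive step
      push_neg at hM'
      set M' : ℤ := M - (k:ℤ)*i with hM'def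
      have hdvd' : (k:ℤ) ∣ M' := (dvd_sub_right hdvd).mpr (dvd_mul_right _ _)
      -- M' ≤ k*(N-k+1)
      have hdom' : M' ≤ (k:ℤ)*(N - k + 1) := by
        have s1 : M' * (N+1) ≤ M * (N+1-k) := by
          have := mul_le_mul_of_nonneg_left hMi (by linarith : (0:ℤ) ≤ (k:ℤ))
          nlinarith [this]
        have s2 : M * (N+1-k) ≤ (k:ℤ)*((N+1) - k + 1) * (N+1-k) :=
          mul_le_mul_of_nonneg_right hdom (by linarith)
        have s3 : (k:ℤ)*((N+1) - k + 1) * (N+1-k) ≤ ((k:ℤ)*(N - k + 1)) * (N+1) := by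
          nlinarith [mul_nonneg (by linarith : (0:ℤ) ≤ (k:ℤ)) (by linarith : (0:ℤ) ≤ N+1-k)]
        have := le_trans s1 (le_trans s2 s3)
        exact le_of_mul_le_mul_right this hNpos
      have hM'iN : M' ≤ i * N := by nlinarith [hMi, hi1]
      set i' : ℕ := i.toNat with hi'_def
      have hii' : (i':ℤ) = i := Int.toNat_of_nonneg (by linarith)
      have hi'1 : 1 ≤ i' := by omega
      have hIH := ih M' hM' hdvd' hdom' i' hi'1 (by rw [hii']; exact hM'iN)
      rw [hfM]
      push_cast
      have hIH' : (f M' N : ℝ) ≤ Ac k i' * (N:ℝ) + Bc k i' * (M':ℝ) := hIH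
      have hiR : ((i':ℕ):ℝ) = (i:ℝ) := by exact_mod_cast hii'
      -- algebra: A_{i'} N + B_{i'} (M - k i) + 1 = A_{i'}(N+1) + B_{i'} M
      have halg : Ac k i' * (N:ℝ) + Bc k i' * ((M:ℝ) - (k:ℝ)*(i:ℝ)) + 1
          = Ac k i' * ((N:ℝ)+1) + Bc k i' * (M:ℝ) := by
        unfold Ac
        rw [← hiR]
        ring
      have hM'R : ((M':ℤ):ℝ) = (M:ℝ) - (k:ℝ)*(i:ℝ) := by
        rw [hM'def]; push_cast; ring
      -- chain
      have hchain : Ac k i' * ((N:ℝ)+1) + Bc k i' * (M:ℝ)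
          ≤ Ac k j * ((N:ℝ)+1) + Bc k j * (M:ℝ) := by
        apply chain_le hk ((N:ℝ)+1) (M:ℝ) (by exact_mod_cast le_of_lt hNpos) i' j hi'1
        · omega
        · rw [hiR]
          have : (M:ℝ) ≤ (i:ℝ) * ((N:ℝ)+1) := by exact_mod_cast hMi
          exact this
      rw [hM'R] at hIH'
      linarith [hIH', halg, hchain]

lemma Bc_prod {k : ℕ} (hk : 1 < k) :
    ∀ j : ℕ, Bc k (j+1) * ∏ i ∈ Finset.range (j+1), ((k:ℝ)/((k:ℝ)-1) + i)
      = (Nat.factorial j : ℝ)/((k:ℝ)-1) := by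
  have hK : (2:ℝ) ≤ (k:ℝ) := by exact_mod_cast hk
  have hk0 : (k:ℝ) ≠ 0 := by linarith
  have hk1 : (k:ℝ) - 1 ≠ 0 := by linarith
  intro j
  induction j with
  | zero =>
      simp [Bc_one, Nat.factorial]
      field_simp
  | succ t ih =>
      rw [Finset.prod_range_succ, Bc_succ (t+1) (by omega)]
      have hD : ((k:ℝ)-1)*((t:ℝ)+1+1)+1 ≠ 0 := by nlinarith
      have hx : (k:ℝ)/((k:ℝ)-1) + ((t:ℕ)+1:ℝ)
          = (((k:ℝ)-1)*(((t:ℕ):ℝ)+1+1)+1)/((k:ℝ)-1) := by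
        field_simp
        ring
      push_cast
      push_cast at ih
      rw [mul_comm (Bc k (t+1)) _, mul_assoc, ← mul_assoc (Bc k (t+1)), ih]
      rw [Nat.factorial_succ]
      push_cast
      field_simp
      ring


/-- For a good function `f` of order `k` and any `n ≥ k`,
`f(kn, n)/n ≤ 1 - k!/∏_{i=0}^{k-1}(k/(k-1)+i)`. -/
theorem good_function_bound (k : ℕ) (hk : 1 < k) (f : ℤ → ℤ → ℤ)
    (hnonneg : ∀ M N, 0 ≤ f M N)
    (hzero : ∀ M N : ℤ, M ≤ 0 ∨ N ≤ 0 → f M N = 0)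
    (hrec : ∀ M N : ℤ, 0 < M → 0 < N →
      f M N = f (M - (k : ℤ) * ⌈(M : ℚ) / (N : ℚ)⌉) (N - 1) + 1) :
    ∀ n : ℕ, k ≤ n →
      (f ((k : ℤ) * n) (n : ℤ) : ℝ) / (n : ℝ) ≤
        1 - (Nat.factorial k : ℝ) / ∏ i ∈ Finset.range k, ((k : ℝ) / ((k : ℝ) - 1) + i) := by
  have hK : (2:ℝ) ≤ (k:ℝ) := by exact_mod_cast hk
  have hk1 : (k:ℝ) - 1 ≠ 0 := by linarith
  have hkpos : (0:ℝ) < k := by linarith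
  -- the product is positive
  have hPpos : (0:ℝ) < ∏ i ∈ Finset.range k, ((k : ℝ) / ((k : ℝ) - 1) + i) := by
    apply Finset.prod_pos
    intro i _
    have : (0:ℝ) ≤ (i:ℝ) := by positivity
    have : (0:ℝ) < (k:ℝ)/((k:ℝ)-1) := by apply div_pos <;> linarith
    linarith
  -- identity : k! / P = k (k-1) Bc k k
  have hkk : k - 1 + 1 = k := Nat.succ_pred_eq_of_pos (lt_trans Nat.zero_lt_one hk)
  have hBP : Bc k k * ∏ i ∈ Finset.range k, ((k : ℝ) / ((k : ℝ) - 1) + i)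
      = (Nat.factorial (k-1) : ℝ)/((k:ℝ)-1) := by
    have := Bc_prod hk (k-1)
    rwa [hkk] at this
  have hfact : (Nat.factorial k : ℝ) = (k:ℝ) * (Nat.factorial (k-1) : ℝ) := by
    rw [← Nat.mul_factorial_pred (by omega : k ≠ 0)]
    push_cast
    ring
  have hident : (Nat.factorial k : ℝ) / ∏ i ∈ Finset.range k, ((k : ℝ) / ((k : ℝ) - 1) + i)
      = (k:ℝ)*((k:ℝ)-1)*Bc k k := by
    rw [hfact, div_eq_iff (ne_of_gt hPpos), eq_comm]
    calc (k:ℝ)*((k:ℝ)-1)*Bc k k * ∏ i ∈ Finset.range k, ((k : ℝ) / ((k : ℝ) - 1) + i)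
        = (k:ℝ)*((k:ℝ)-1)*(Bc k k * ∏ i ∈ Finset.range k, ((k : ℝ) / ((k : ℝ) - 1) + i)) := by
          ring
      _ = (k:ℝ)*((k:ℝ)-1)*((Nat.factorial (k-1) : ℝ)/((k:ℝ)-1)) := by rw [hBP]
      _ = (k:ℝ) * (Nat.factorial (k-1) : ℝ) := by field_simp
  rw [hident]
  intro n hn
  have hnZ : (k:ℤ) ≤ (n:ℤ) := by exact_mod_cast hn
  have hn0 : (0:ℤ) < (n:ℤ) := by
    have : (2:ℤ) ≤ (k:ℤ) := by exact_mod_cast hk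
    linarith
  have hnR : (0:ℝ) < (n:ℝ) := by exact_mod_cast hn0
  -- first step of the recursion
  have hceil : ⌈(((k:ℤ)*(n:ℤ) : ℤ) : ℚ) / ((n:ℤ) : ℚ)⌉ = (k:ℤ) := by
    have hq : (((k:ℤ)*(n:ℤ) : ℤ) : ℚ) / ((n:ℤ) : ℚ) = ((k:ℤ) : ℚ) := by
      have hnq : ((n:ℕ):ℚ) ≠ 0 := Nat.cast_ne_zero.mpr (by omega)
      push_cast
      rw [mul_div_assoc, div_self hnq, mul_one]
    rw [hq, Int.ceil_intCast]
  have hstep : f ((k:ℤ)*(n:ℤ)) (n:ℤ) = f ((k:ℤ)*((n:ℤ)-(k:ℤ))) ((n:ℤ)-1) + 1 := by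
    have h := hrec ((k:ℤ)*(n:ℤ)) (n:ℤ) (by positivity) hn0
    rw [hceil] at h
    have : (k:ℤ)*(n:ℤ) - (k:ℤ)*(k:ℤ) = (k:ℤ)*((n:ℤ)-(k:ℤ)) := by ring
    rwa [this] at h
  have hBpos := Bc_pos hk k
  have hBle := Bc_le hk k (by omega)
  rw [div_le_iff₀ hnR, hstep]
  rcases eq_or_lt_of_le hnZ with heq | hlt
  · -- n = k
    have : (n:ℤ) - (k:ℤ) = 0 := by omega
    rw [this, mul_zero, hzero 0 ((n:ℤ)-1) (Or.inl le_rfl)]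
    push_cast
    -- goal: 0 + 1 ≤ (1 - k(k-1)B) * n  with n = k
    have hnk : (n:ℝ) = (k:ℝ) := by exact_mod_cast heq.symm
    rw [hnk]
    have h2 : Bc k k * ((k:ℝ)*(((k:ℕ):ℝ)*(k:ℝ)-1)) ≤ (k:ℝ)-1 := by
      rw [← le_div_iff₀ (by push_cast; nlinarith)]
      exact hBle
    push_cast at h2
    nlinarith [h2, hBpos, hK]
  · -- k < n
    have hN1 : (1:ℤ) ≤ (n:ℤ) - 1 := by omega
    have hMpos : (0:ℤ) < (k:ℤ)*((n:ℤ)-(k:ℤ)) := by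
      apply mul_pos (by exact_mod_cast (by omega : 0 < k)) (by omega)
    have hdom : (k:ℤ)*((n:ℤ)-(k:ℤ)) ≤ (k:ℤ)*(((n:ℤ)-1) - (k:ℤ) + 1) := by
      apply le_of_eq; ring
    have hjN : (k:ℤ)*((n:ℤ)-(k:ℤ)) ≤ ((k:ℕ):ℤ)*((n:ℤ)-1) := by
      have h1 : (0:ℤ) < (k:ℤ) := by exact_mod_cast (by omega : 0 < k)
      nlinarith
    have hmain := main_ind k hk f hzero hrec ((n:ℤ)-1) hN1 ((k:ℤ)*((n:ℤ)-(k:ℤ)))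
      hMpos (dvd_mul_right _ _) hdom k (by omega) hjN
    push_cast at hmain ⊢
    have halg : Ac k k * ((n:ℝ)-1) + Bc k k * ((k:ℝ)*((n:ℝ)-(k:ℝ))) + 1
        = (1 - (k:ℝ)*((k:ℝ)-1)*Bc k k) * (n:ℝ) := by
      unfold Ac
      ring
    linarith [hmain, halg]
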